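/- Let $G$ be a group, $A$ a set, $H \leq G$, and $\tau \colon A^G \to A^G$ a cellular automaton with memory set contained in $H$. Then $\tau(A^G)$ is closed in $A^G$ (prodiscrete topology) if and only if $\tau_H(A^H)$ is closed in $A^H$ (prodiscrete topology). -/

import Mathlib

/-- The prodiscrete topology on `G → A`: product of discrete topologies. -/
def prodiscrete (G A : Type*) : TopologicalSpace (G → A) :=
  @Pi.topologicalSpace G (fun _ => A) (fun _ => ⊥)

/-- A cellular automaton `τ` over `G` with memory set contained in a subgroup
`H` has closed image in `A^G` iff its restriction `τ_H` has closed image in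
`A^H` (prodiscrete topologies). -/
theorem closed_image_iff_restriction_closed_image {G A : Type*} [Group G] (H : Subgroup G)
    (τ : (G → A) → (G → A)) (M : Finset H) (μ : (M → A) → A)
    (hτ : ∀ (x : G → A) (g : G), τ x g = μ (fun m => x (g * ((m.val : H) : G))))
    (τH : (H → A) → (H → A))
    (hτH : ∀ (y : H → A) (h : H), τH y h = μ (fun m => y (h * m.val))) :
    @IsClosed _ (prodiscrete G A) (Set.range τ) ↔
      @IsClosed _ (prodiscrete H A) (Set.range τH) := by
  classical
  letI : TopologicalSpace A := ⊥
  haveI : DiscreteTopology A := ⟨rfl⟩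
  change IsClosed (Set.range τ) ↔ IsClosed (Set.range τH)
  set Q := G ⧸ H with hQ
  -- membership proof for the inverse map
  have hmem : ∀ g : G, ((QuotientGroup.mk g : Q).out)⁻¹ * g ∈ H := fun g =>
    QuotientGroup.eq.mp (QuotientGroup.out_eq' (QuotientGroup.mk g : Q))
  -- the homeomorphism  A^G ≃ₜ (Q → A^H)
  let F : (G → A) ≃ₜ (Q → H → A) :=
    { toFun := fun x q h => x (q.out * h)
      invFun := fun z g => z (QuotientGroup.mk g) ⟨((QuotientGroup.mk g : Q).out)⁻¹ * g, hmem g⟩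
      left_inv := by
        intro x
        funext g
        simp only [mul_inv_cancel_left]
      right_inv := by
        intro z
        funext q h
        have h1 : (QuotientGroup.mk (q.out * (h : G)) : Q) = q := by
          rw [QuotientGroup.mk_mul_of_mem _ h.2, QuotientGroup.out_eq']
        have haux : ∀ (q' : Q) (a : ↥H), q' = q → ((a : G) = (h : G)) → z q' a = z q h := by
          rintro q' a rfl hah
          rw [Subtype.ext hah]
        exact haux _ _ h1 (by show ((QuotientGroup.mk (q.out * (h : G)) : Q).out)⁻¹ *
          (q.out * (h : G)) = (h : G); rw [h1, inv_mul_cancel_left])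
      continuous_toFun := by
        apply continuous_pi; intro q; apply continuous_pi; intro h
        exact continuous_apply _
      continuous_invFun := by
        apply continuous_pi; intro g
        show Continuous fun z : Q → H → A =>
          z (QuotientGroup.mk g) ⟨((QuotientGroup.mk g : Q).out)⁻¹ * g, hmem g⟩
        exact (continuous_apply _).comp (continuous_apply (QuotientGroup.mk g : Q)) }
  -- the key equivariance
  have key : ∀ x : G → A, F (τ x) = fun q => τH (F x q) := by
    intro x
    funext q h
    show τ x (q.out * h) = τH (fun h' => x (q.out * h')) h
    rw [hτ, hτH]
    congr 1
    funext m
    show x (q.out * (h : G) * ((m.val : H) : G)) = x (q.out * ((h * m.val : H) : G))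
    rw [Subgroup.coe_mul, mul_assoc]
  -- range τ as a preimage
  have hrange : Set.range τ = F ⁻¹' (Set.univ.pi fun _ : Q => Set.range τH) := by
    ext x
    constructor
    · rintro ⟨y, rfl⟩
      intro q _
      rw [key y]
      exact ⟨F y q, rfl⟩
    · intro hx
      choose w hw using fun q => hx q (Set.mem_univ q)
      refine ⟨F.symm w, ?_⟩
      have : F (τ (F.symm w)) = F x := by
        rw [key]
        funext q
        simp only [Homeomorph.apply_symm_apply]
        exact hw q
      exact F.injective this
  rw [hrange]
  rw [F.isClosed_preimage]
  constructor
  · intro hpi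
    rcases Set.eq_empty_or_nonempty (Set.range τH) with he | ⟨w, hwmem⟩
    · rw [he]; exact isClosed_empty
    · have : Set.range τH =
          (fun y : H → A => Function.update (fun _ : Q => w) (QuotientGroup.mk (1 : G) : Q) y) ⁻¹'
            (Set.univ.pi fun _ : Q => Set.range τH) := by
        ext y
        simp only [Set.mem_preimage, Set.mem_pi, Set.mem_univ, forall_true_left]
        constructor
        · intro hy q
          by_cases hq : q = (QuotientGroup.mk (1 : G) : Q)
          · subst hq; rw [Function.update_self]; exact hy
          · rw [Function.update_of_ne hq]; exact hwmem
        · intro hy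
          have := hy (QuotientGroup.mk (1 : G) : Q)
          rwa [Function.update_self] at this
      rw [this]
      apply IsClosed.preimage _ hpi
      apply continuous_pi
      intro q
      by_cases hq : q = (QuotientGroup.mk (1 : G) : Q)
      · subst hq
        simp only [Function.update_self]
        exact continuous_id
      · simp only [Function.update_of_ne hq]
        exact continuous_const
  · intro hcl
    exact isClosed_set_pi fun q _ => hcl
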